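/- The map ϱ satisfies the triangle inequality: for all α, β, γ ∈ Ĩ, ϱ(α, β) + ϱ(β, γ) ≥ ϱ(α, γ). -/
import Mathlib


/-- The set of intuitionistic fuzzy values (IFVs). -/
def Itilde : Set (ℝ × ℝ) :=
  {p | 0 ≤ p.1 ∧ p.1 ≤ 1 ∧ 0 ≤ p.2 ∧ p.2 ≤ 1 ∧ p.1 + p.2 ≤ 1}

/-- Score degree `s(α) = μ_α - ν_α`. -/
def score (p : ℝ × ℝ) : ℝ := p.1 - p.2

/-- Accuracy degree `h(α) = μ_α + ν_α`. -/
def accuracy (p : ℝ × ℝ) : ℝ := p.1 + p.2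

/-- The distance measure `ϱ` of Wu et al. -/
noncomputable def vrho (a b : ℝ × ℝ) : ℝ :=
  if score a ≠ score b then (1 + |score a - score b|) / 3
  else |accuracy a - accuracy b| / 3

/-- The triangle inequality for `ϱ`: for all `α, β, γ ∈ Ĩ`,
`ϱ(α, β) + ϱ(β, γ) ≥ ϱ(α, γ)`. -/
theorem vrho_triangle (a b c : ℝ × ℝ)
    (ha : a ∈ Itilde) (hb : b ∈ Itilde) (hc : c ∈ Itilde) :
    vrho a b + vrho b c ≥ vrho a c := by
  obtain ⟨ha1, ha2, ha3, ha4, ha5⟩ := ha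
  obtain ⟨hc1, hc2, hc3, hc4, hc5⟩ := hc
  simp only [vrho]
  rcases eq_or_ne (score a) (score b) with h1 | h1 <;>
    rcases eq_or_ne (score b) (score c) with h2 | h2
  · have h3 : score a = score c := h1.trans h2
    rw [if_neg (not_not_intro h1), if_neg (not_not_intro h2), if_neg (not_not_intro h3)]
    have := abs_sub_le (accuracy a) (accuracy b) (accuracy c)
    linarith
  · have h3 : score a ≠ score c := h1 ▸ h2
    rw [if_neg (not_not_intro h1), if_pos h2, if_pos h3]
    have h4 : score a - score c = score b - score c := by rw [h1]
    rw [h4]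
    have := abs_nonneg (accuracy a - accuracy b)
    linarith
  · have h3 : score a ≠ score c := h2 ▸ h1
    rw [if_pos h1, if_neg (not_not_intro h2), if_pos h3]
    have h4 : score a - score c = score a - score b := by rw [h2]
    rw [h4]
    have := abs_nonneg (accuracy b - accuracy c)
    linarith
  · rcases eq_or_ne (score a) (score c) with h3 | h3
    · rw [if_pos h1, if_pos h2, if_neg (not_not_intro h3)]
      have hac : |accuracy a - accuracy c| ≤ 1 := by
        rw [abs_le]
        constructor <;> (simp only [accuracy]; nlinarith)
      have := abs_nonneg (score a - score b)
      have := abs_nonneg (score b - score c)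
      linarith
    · rw [if_pos h1, if_pos h2, if_pos h3]
      have := abs_sub_le (score a) (score b) (score c)
      linarith
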